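/- For every μ ∈ (0,1) and every σ² > 0, the second moment of the score with respect to μ under the simplex distribution equals ∫₀¹ u(y,μ)² · (y−μ)² · p(y;μ,σ²) dy = v(μ,σ²), where v(μ,σ²) = σ²·( 3σ²/(μ(1−μ)) + 1/(μ³(1−μ)³) ). (This is the key quantity in the Fisher information K_ββ = X̃ᵀ S W X̃ with weight w = v/(σ² g′(μ)²).) -/

import Mathlib

open Real MeasureTheory

open Set Filter Topology in
private lemma integrable_pow_mul_gauss' {b : ℝ} (hb : 0 < b) (n : ℕ) :
    Integrable (fun x : ℝ => x ^ n * Real.exp (-b * x ^ 2)) := by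
  have h := integrable_rpow_mul_exp_neg_mul_sq hb
    (s := (n : ℝ)) (lt_of_lt_of_le (by norm_num) (Nat.cast_nonneg n))
  simpa [Real.rpow_natCast] using h

open Set Filter Topology in
private lemma tendsto_pow_mul_gauss' {b : ℝ} (hb : 0 < b) (n : ℕ) :
    Tendsto (fun x : ℝ => x ^ n * Real.exp (-b * x ^ 2)) atTop (𝓝 0) := by
  have h := (rpow_mul_exp_neg_mul_sq_isLittleO_exp_neg hb (n : ℝ)).tendsto_zero_of_tendsto
    (Real.tendsto_exp_atBot.comp
      (tendsto_id.const_mul_atTop_of_neg (by norm_num : -(1/2:ℝ) < 0)))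
  simpa [Real.rpow_natCast] using h

open Set Filter Topology in
private lemma gauss_reduction' {b : ℝ} (hb : 0 < b) (n : ℕ) :
    ∫ x in Ioi (0:ℝ), x ^ (n+2) * Real.exp (-b * x ^ 2)
      = ((n+1 : ℝ) / (2*b)) * ∫ x in Ioi (0:ℝ), x ^ n * Real.exp (-b * x ^ 2) := by
  have hD : ∀ x ∈ Ici (0:ℝ), HasDerivAt (fun x : ℝ => x ^ (n+1) * Real.exp (-b * x ^ 2))
      ((n+1 : ℝ) * x ^ n * Real.exp (-b * x ^ 2)
        - 2 * b * (x ^ (n+2) * Real.exp (-b * x ^ 2))) x := by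
    intro x _
    have h1 : HasDerivAt (fun x : ℝ => x ^ (n+1)) ((n+1 : ℝ) * x ^ n) x := by
      simpa using hasDerivAt_pow (n+1) x
    have h2 : HasDerivAt (fun x : ℝ => Real.exp (-b * x ^ 2))
        (Real.exp (-b * x ^ 2) * (-b * (2 * x))) x := by
      have : HasDerivAt (fun x : ℝ => -b * x ^ 2) (-b * (2 * x)) x := by
        simpa using ((hasDerivAt_pow 2 x).const_mul (-b))
      exact this.exp
    have := h1.mul h2
    refine this.congr_deriv ?_
    ring
  have hint : IntegrableOn (fun x : ℝ => (n+1 : ℝ) * x ^ n * Real.exp (-b * x ^ 2)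
      - 2 * b * (x ^ (n+2) * Real.exp (-b * x ^ 2))) (Ioi (0:ℝ)) := by
    apply Integrable.integrableOn
    have := ((integrable_pow_mul_gauss' hb n).const_mul ((n+1:ℝ))).sub
      ((integrable_pow_mul_gauss' hb (n+2)).const_mul (2*b))
    simpa [mul_assoc, Pi.sub_def] using this
  have hFTC := integral_Ioi_of_hasDerivAt_of_tendsto' (m := (0:ℝ)) hD hint ?_
  · rw [MeasureTheory.integral_sub ((integrable_pow_mul_gauss' hb n).const_mul
        ((n+1:ℝ)) |>.integrableOn |>.congr_fun (fun x _ => by ring) measurableSet_Ioi)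
      (((integrable_pow_mul_gauss' hb (n+2)).const_mul (2*b)).integrableOn)] at hFTC
    norm_num at hFTC
    simp only [neg_mul] at hFTC ⊢
    rw [show (fun a : ℝ => ((n:ℝ)+1) * a ^ n * Real.exp (-(b * a ^ 2)))
        = (fun a : ℝ => ((n:ℝ)+1) * (a ^ n * Real.exp (-(b * a ^ 2)))) from funext fun a => by ring]
      at hFTC
    rw [integral_const_mul, integral_const_mul] at hFTC
    have hb' : (2:ℝ)*b ≠ 0 := by positivity
    field_simp
    linarith [hFTC]
  · have := tendsto_pow_mul_gauss' hb (n+1)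
    simpa using this

open Set Filter Topology in
private lemma integral_gauss_even_moment' {b : ℝ} (hb : 0 < b) (n : ℕ) :
    ∫ x : ℝ, x ^ (2*n) * Real.exp (-b * x ^ 2)
      = 2 * ∫ x in Ioi (0:ℝ), x ^ (2*n) * Real.exp (-b * x ^ 2) := by
  rw [← integral_comp_abs (f := fun x : ℝ => x ^ (2*n) * Real.exp (-b * x ^ 2))]
  congr 1
  funext x
  rw [pow_mul, pow_mul, sq_abs]

open Set Filter Topology in
private lemma integral_gauss_two' {b : ℝ} (hb : 0 < b) :
    ∫ x : ℝ, x ^ 2 * Real.exp (-b * x ^ 2) = Real.sqrt (π / b) / (2 * b) := by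
  simp only [neg_mul]
  have h := integral_gauss_even_moment' hb 1
  norm_num at h
  rw [h]
  have hr := gauss_reduction' hb 0
  norm_num at hr
  rw [hr]
  have hg := integral_gaussian_Ioi b
  simp only [neg_mul] at hg
  rw [hg]
  field_simp

open Set Filter Topology in
private lemma integral_gauss_four' {b : ℝ} (hb : 0 < b) :
    ∫ x : ℝ, x ^ 4 * Real.exp (-b * x ^ 2) = 3 * Real.sqrt (π / b) / (4 * b ^ 2) := by
  simp only [neg_mul]
  have h := integral_gauss_even_moment' hb 2
  norm_num at h
  rw [h]
  have hr := gauss_reduction' hb 2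
  norm_num at hr
  rw [hr]
  have hr0 := gauss_reduction' hb 0
  norm_num at hr0
  rw [hr0]
  have hg := integral_gaussian_Ioi b
  simp only [neg_mul] at hg
  rw [hg]
  field_simp
  ring

open Set Filter Topology in
private lemma integral_odd_eq_zero' (f : ℝ → ℝ) (hf : ∀ x, f (-x) = - f x) :
    ∫ x : ℝ, f x = 0 := by
  have h : ∫ x : ℝ, f (-x) = ∫ x : ℝ, f x := integral_neg_eq_self f _
  have h2 : ∫ x : ℝ, f (-x) = - ∫ x : ℝ, f x := by
    simp_rw [hf]
    exact integral_neg f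
  linarith [h, h2]

/-- The unit deviance of the simplex distribution. -/
noncomputable def simplexDev (y μ : ℝ) : ℝ :=
  (y - μ)^2 / (y * (1 - y) * μ^2 * (1 - μ)^2)

/-- The simplex density. -/
noncomputable def simplexPdf (y μ σ2 : ℝ) : ℝ :=
  (2 * Real.pi * σ2 * (y * (1 - y))^3) ^ (-(1/2) : ℝ) *
    Real.exp (-(simplexDev y μ) / (2 * σ2))

/-- The quantity u(y,μ). -/
noncomputable def simplexU (y μ : ℝ) : ℝ :=
  (1 / (μ * (1 - μ))) * (simplexDev y μ + 1 / (μ^2 * (1 - μ)^2))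

/-- The quantity v(μ,σ²). -/
noncomputable def simplexV (μ σ2 : ℝ) : ℝ :=
  σ2 * (3 * σ2 / (μ * (1 - μ)) + 1 / (μ^3 * (1 - μ)^3))

set_option maxHeartbeats 2000000 in
open Set Filter Topology in
/-- The second moment of the score with respect to μ under the simplex
distribution equals v(μ,σ²). -/
theorem simplexPdf_score_second_moment (μ σ2 : ℝ) (hμ : μ ∈ Set.Ioo (0:ℝ) 1)
    (hσ2 : 0 < σ2) :
    ∫ y in (0:ℝ)..1, (simplexU y μ)^2 * (y - μ)^2 * simplexPdf y μ σ2 =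
      simplexV μ σ2 := by
  obtain ⟨hμ0, hμ1⟩ := hμ
  have ha : (0:ℝ) < μ*(1-μ) := by nlinarith
  have hane : μ*(1-μ) ≠ 0 := ne_of_gt ha
  have hs2π : (0:ℝ) < Real.sqrt (2*π*σ2) := Real.sqrt_pos.2 (by positivity)
  set a := μ*(1-μ) with hadef
  set f : ℝ → ℝ := fun y => (y - μ) / (a * Real.sqrt (y*(1-y))) with hfdef
  set f' : ℝ → ℝ := fun y => (μ + y - 2*μ*y) / (2*a*(Real.sqrt (y*(1-y)))^3) with hf'def
  set g : ℝ → ℝ := fun t => (1 / (a^3 * Real.sqrt (2*π*σ2)))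
      * Real.exp (-t^2/(2*σ2)) * (t^2 * (1+a^2*t^2))
      * (1 + a*(1-2*μ)*t / Real.sqrt (a^2*t^2 + 4*a)) with hgdef
  -- basic facts on (0,1)
  have hyy : ∀ y ∈ Ioo (0:ℝ) 1, (0:ℝ) < y*(1-y) := by
    rintro y ⟨hy0, hy1⟩; nlinarith
  have hWpos : ∀ y ∈ Ioo (0:ℝ) 1, (0:ℝ) < μ + y - 2*μ*y := by
    rintro y ⟨hy0, hy1⟩; nlinarith
  have hf'pos : ∀ y ∈ Ioo (0:ℝ) 1, (0:ℝ) < f' y := by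
    intro y hy
    have h1 := hyy y hy
    have h2 := hWpos y hy
    have hr : (0:ℝ) < Real.sqrt (y*(1-y)) := Real.sqrt_pos.2 h1
    exact div_pos h2 (by positivity)
  -- derivative
  have hderiv : ∀ y ∈ Ioo (0:ℝ) 1, HasDerivAt f (f' y) y := by
    intro y hy
    obtain ⟨hy0, hy1⟩ := hy
    have hyy' : (0:ℝ) < y*(1-y) := by nlinarith
    rw [hf'def, hfdef]
    simp only
    set r := Real.sqrt (y*(1-y)) with hrdef
    have hr : (0:ℝ) < r := Real.sqrt_pos.2 hyy'
    have hr2 : r^2 = y*(1-y) := Real.sq_sqrt hyy'.le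
    have hrne : r ≠ 0 := ne_of_gt hr
    have h1 : HasDerivAt (fun y : ℝ => y*(1-y)) (1 - 2*y) y := by
      have h := (hasDerivAt_id y).mul ((hasDerivAt_const y (1:ℝ)).sub (hasDerivAt_id y))
      refine h.congr_deriv ?_
      simp [id_eq]
      ring
    have h2 : HasDerivAt (fun y : ℝ => Real.sqrt (y*(1-y))) ((1-2*y)/(2*r)) y := by
      have h := (Real.hasDerivAt_sqrt (ne_of_gt hyy')).comp y h1
      refine h.congr_deriv ?_
      rw [hrdef]
      ring
    have h3 : HasDerivAt (fun y : ℝ => a * Real.sqrt (y*(1-y)))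
        (a*((1-2*y)/(2*r))) y := h2.const_mul _
    have h4 : HasDerivAt (fun y => (y - μ) / (a * Real.sqrt (y*(1-y))))
        ((1*(a*r) - (y-μ)*(a*((1-2*y)/(2*r))))/(a*r)^2) y :=
      ((hasDerivAt_id y).sub_const μ).div h3 (by positivity)
    have hnum : 2*r^2 - (y-μ)*(1-2*y) = μ + y - 2*μ*y := by rw [hr2]; ring
    have hcalc : (1*(a*r) - (y-μ)*(a*((1-2*y)/(2*r))))/(a*r)^2
        = (μ + y - 2*μ*y) / (2*a*r^3) := by
      rw [← hnum]
      field_simp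
    rw [← hcalc]
    exact h4
  -- key pointwise identity
  have key : ∀ y ∈ Ioo (0:ℝ) 1,
      simplexU y μ ^ 2 * (y - μ)^2 * simplexPdf y μ σ2 = |f' y| • g (f y) := by
    intro y hy
    obtain ⟨hy0, hy1⟩ := hy
    have hyy' : (0:ℝ) < y*(1-y) := by nlinarith
    have hr : (0:ℝ) < Real.sqrt (y*(1-y)) := Real.sqrt_pos.2 hyy'
    set r := Real.sqrt (y*(1-y)) with hrdef
    have hr2 : r^2 = y*(1-y) := Real.sq_sqrt hyy'.le
    have hrne : r ≠ 0 := ne_of_gt hr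
    have hW : (0:ℝ) < μ + y - 2*μ*y := by nlinarith
    set W := μ + y - 2*μ*y with hWdef
    set t := (y - μ) / (a * r) with htdef
    have hdev : simplexDev y μ = (y-μ)^2/(r^2*a^2) := by
      rw [simplexDev]
      rw [show y * (1 - y) * μ^2 * (1-μ)^2 = r^2*a^2 by rw [hr2, hadef]; ring]
    have ht2 : t^2 = (y-μ)^2/(r^2*a^2) := by
      rw [htdef, div_pow, mul_pow]
      ring_nf
    have hpdf : simplexPdf y μ σ2
        = (1/(Real.sqrt (2*π*σ2) * r^3)) * Real.exp (-((y-μ)^2/(r^2*a^2))/(2*σ2)) := by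
      rw [simplexPdf, hdev]
      congr 1
      have hX : 2*π*σ2*(y*(1-y))^3 = (Real.sqrt (2*π*σ2) * r^3)^2 := by
        rw [← hr2, mul_pow, Real.sq_sqrt (by positivity : (0:ℝ) ≤ 2*π*σ2)]
        ring
      have hs : (0:ℝ) < Real.sqrt (2*π*σ2) * r^3 := by positivity
      rw [hX, ← Real.rpow_natCast (Real.sqrt (2*π*σ2) * r^3) 2, ← Real.rpow_mul hs.le]
      norm_num
      rw [Real.rpow_neg_one]
      ring
    have hΔarg : a^2*t^2 + 4*a = (W/r)^2 := by
      rw [ht2]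
      have h1 : a^2*((y-μ)^2/(r^2*a^2)) + 4*a = ((y-μ)^2 + 4*a*r^2)/r^2 := by
        field_simp
      rw [h1, hr2, show (y-μ)^2 + 4*a*(y*(1-y)) = W^2 by rw [hWdef, hadef]; ring, ← hr2]
      rw [div_pow]
    have hΔ : Real.sqrt (a^2*t^2 + 4*a) = W/r := by
      rw [hΔarg, Real.sqrt_sq (by positivity)]
    have hu : simplexU y μ = (r^2+(y-μ)^2)/(a^3*r^2) := by
      rw [simplexU, hdev, show μ^2*(1-μ)^2 = a^2 by rw [hadef]; ring, hadef]
      field_simp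
      ring
    have hlast : 1 + a*(1-2*μ)*t / Real.sqrt (a^2*t^2 + 4*a) = 2*(r^2+(y-μ)^2)/W := by
      rw [hΔ, htdef]
      have hh : a*(1-2*μ)*((y-μ)/(a*r)) / (W/r) = (1-2*μ)*(y-μ)/W := by
        field_simp
      rw [hh]
      rw [show (2:ℝ)*(r^2+(y-μ)^2) = W + (1-2*μ)*(y-μ) by rw [hr2, hWdef]; ring]
      field_simp
    have habs : |f' y| = W / (2*a*r^3) := by
      rw [hf'def]
      simp only
      rw [← hrdef, ← hWdef]
      exact abs_of_pos (div_pos hW (by positivity))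
    have hfy : f y = t := by rw [hfdef, htdef, hrdef]
    rw [smul_eq_mul, habs, hu, hpdf, hgdef]
    simp only
    rw [hfy, hlast, ht2]
    have hane3 : a^3 ≠ 0 := by positivity
    have hWne : W ≠ 0 := ne_of_gt hW
    field_simp
  -- strict monotonicity and injectivity
  have hmono : StrictMonoOn f (Ioo (0:ℝ) 1) := by
    apply strictMonoOn_of_deriv_pos (convex_Ioo 0 1)
    · intro y hy
      exact (hderiv y hy).continuousAt.continuousWithinAt
    · intro y hy
      rw [interior_Ioo] at hy
      rw [(hderiv y hy).deriv]
      exact hf'pos y hy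
  -- image is univ
  have himg : f '' (Ioo (0:ℝ) 1) = univ := by
    apply eq_univ_of_forall
    intro c
    have hbot : Tendsto f (𝓝[>] (0:ℝ)) atBot := by
      have h1 : Tendsto (fun y : ℝ => y - μ) (𝓝[>] (0:ℝ)) (𝓝 (-μ)) := by
        apply Tendsto.mono_left _ nhdsWithin_le_nhds
        have := (continuous_sub_right μ).tendsto (0:ℝ)
        simpa using this
      have h2 : Tendsto (fun y : ℝ => (a * Real.sqrt (y*(1-y)))⁻¹) (𝓝[>] (0:ℝ)) atTop := by
        apply tendsto_inv_nhdsGT_zero.comp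
        apply tendsto_nhdsWithin_of_tendsto_nhds_of_eventually_within
        · apply Tendsto.mono_left _ nhdsWithin_le_nhds
          have hc : Continuous (fun y : ℝ => a * Real.sqrt (y*(1-y))) :=
            continuous_const.mul (Real.continuous_sqrt.comp
              (continuous_id.mul (continuous_const.sub continuous_id)))
          have := hc.tendsto (0:ℝ)
          simpa using this
        · filter_upwards [Ioo_mem_nhdsGT_of_mem (left_mem_Ico.2 one_pos)] with y hy
          have := hyy y hy
          have : (0:ℝ) < Real.sqrt (y*(1-y)) := Real.sqrt_pos.2 this
          exact mem_Ioi.2 (by positivity)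
      have := Filter.Tendsto.neg_mul_atTop (by linarith : -μ < 0) h1 h2
      apply this.congr
      intro y
      simp only [hfdef, div_eq_mul_inv]
    have htop : Tendsto f (𝓝[<] (1:ℝ)) atTop := by
      have h1 : Tendsto (fun y : ℝ => y - μ) (𝓝[<] (1:ℝ)) (𝓝 (1-μ)) := by
        apply Tendsto.mono_left _ nhdsWithin_le_nhds
        have := (continuous_sub_right μ).tendsto (1:ℝ)
        simpa using this
      have h2 : Tendsto (fun y : ℝ => (a * Real.sqrt (y*(1-y)))⁻¹) (𝓝[<] (1:ℝ)) atTop := by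
        apply tendsto_inv_nhdsGT_zero.comp
        apply tendsto_nhdsWithin_of_tendsto_nhds_of_eventually_within
        · apply Tendsto.mono_left _ nhdsWithin_le_nhds
          have hc : Continuous (fun y : ℝ => a * Real.sqrt (y*(1-y))) :=
            continuous_const.mul (Real.continuous_sqrt.comp
              (continuous_id.mul (continuous_const.sub continuous_id)))
          have := hc.tendsto (1:ℝ)
          simpa using this
        · filter_upwards [Ioo_mem_nhdsLT_of_mem (right_mem_Ioc.2 one_pos)] with y hy
          have := hyy y hy
          have : (0:ℝ) < Real.sqrt (y*(1-y)) := Real.sqrt_pos.2 this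
          exact mem_Ioi.2 (by positivity)
      have := Filter.Tendsto.pos_mul_atTop (by linarith : (0:ℝ) < 1-μ) h1 h2
      apply this.congr
      intro y
      simp only [hfdef, div_eq_mul_inv]
    obtain ⟨y₁, hy₁, hfy₁⟩ : ∃ y₁, y₁ ∈ Ioo (0:ℝ) 1 ∧ f y₁ < c := by
      have hev : ∀ᶠ y in 𝓝[>] (0:ℝ), y ∈ Ioo (0:ℝ) 1 :=
        Ioo_mem_nhdsGT_of_mem (left_mem_Ico.2 one_pos)
      have h := (hbot.eventually (eventually_lt_atBot c)).and hev
      obtain ⟨y, h1, h2⟩ := h.exists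
      exact ⟨y, h2, h1⟩
    obtain ⟨y₂, hy₂, hfy₂⟩ : ∃ y₂, y₂ ∈ Ioo (0:ℝ) 1 ∧ c < f y₂ := by
      have hev : ∀ᶠ y in 𝓝[<] (1:ℝ), y ∈ Ioo (0:ℝ) 1 :=
        Ioo_mem_nhdsLT_of_mem (right_mem_Ioc.2 one_pos)
      have h := (htop.eventually (eventually_gt_atTop c)).and hev
      obtain ⟨y, h1, h2⟩ := h.exists
      exact ⟨y, h2, h1⟩
    have hy12 : y₁ < y₂ := by
      by_contra h
      push_neg at h
      have := hmono.monotoneOn hy₂ hy₁ h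
      linarith
    have hsub : Icc y₁ y₂ ⊆ Ioo (0:ℝ) 1 := by
      intro z hz
      exact ⟨lt_of_lt_of_le hy₁.1 hz.1, lt_of_le_of_lt hz.2 hy₂.2⟩
    have hcont : ContinuousOn f (Icc y₁ y₂) := fun z hz =>
      (hderiv z (hsub hz)).continuousAt.continuousWithinAt
    have := intermediate_value_Icc hy12.le hcont
    have hc : c ∈ Icc (f y₁) (f y₂) := ⟨hfy₁.le, hfy₂.le⟩
    obtain ⟨z, hz, hfz⟩ := this hc
    exact ⟨z, hsub hz, hfz⟩
  -- change of variables
  have hCOV : ∫ x : ℝ, g x = ∫ y in Ioo (0:ℝ) 1, |f' y| • g (f y) := by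
    rw [← MeasureTheory.setIntegral_univ, ← himg]
    exact integral_image_eq_integral_abs_deriv_smul measurableSet_Ioo
      (fun x hx => (hderiv x hx).hasDerivWithinAt) hmono.injOn g
  have hLHS : ∫ y in (0:ℝ)..1, (simplexU y μ)^2 * (y - μ)^2 * simplexPdf y μ σ2
      = ∫ x : ℝ, g x := by
    rw [intervalIntegral.integral_of_le zero_le_one,
      MeasureTheory.integral_Ioc_eq_integral_Ioo, hCOV]
    exact setIntegral_congr_fun measurableSet_Ioo key
  rw [hLHS]
  -- compute the integral of g
  have hb : (0:ℝ) < 1/(2*σ2) := by positivity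
  set b := 1/(2*σ2) with hbdef
  have hexp : ∀ s : ℝ, Real.exp (-s^2/(2*σ2)) = Real.exp (-b*s^2) := by
    intro s
    congr 1
    rw [hbdef]
    field_simp
  set c0 := 1 / (a^3 * Real.sqrt (2*π*σ2)) with hc0def
  set O : ℝ → ℝ := fun s => c0 * Real.exp (-b*s^2) * (s^2*(1+a^2*s^2))
      * (a*(1-2*μ)*s / Real.sqrt (a^2*s^2 + 4*a)) with hOdef
  have hgsplit : ∀ s : ℝ, g s = c0*(s^2 * Real.exp (-b*s^2))
      + c0*a^2*(s^4 * Real.exp (-b*s^2)) + O s := by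
    intro s
    rw [hgdef]
    simp only
    rw [hexp s, hOdef]
    ring
  have hΔpos : ∀ s : ℝ, (0:ℝ) < Real.sqrt (a^2*s^2 + 4*a) := by
    intro s
    apply Real.sqrt_pos.2
    positivity
  have hO_int : Integrable O := by
    have h2c : Continuous fun s : ℝ => Real.sqrt (a^2*s^2+4*a) :=
      Real.continuous_sqrt.comp
        ((continuous_const.mul (continuous_pow 2)).add continuous_const)
    have hcont : Continuous O := by
      rw [hOdef]
      have h3 : Continuous fun s : ℝ => a*(1-2*μ)*s / Real.sqrt (a^2*s^2+4*a) :=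
        (continuous_const.mul continuous_id).div h2c (fun s => ne_of_gt (hΔpos s))
      have h4 : Continuous fun s : ℝ => Real.exp (-b*s^2) :=
        (continuous_const.mul (continuous_pow 2)).rexp
      have h5 : Continuous fun s : ℝ => s^2*(1+a^2*s^2) :=
        (continuous_pow 2).mul
          (continuous_const.add (continuous_const.mul (continuous_pow 2)))
      exact ((continuous_const.mul h4).mul h5).mul h3
    have hmaj : Integrable (fun s : ℝ =>
        |c0*(1-2*μ)| * (s^2 * Real.exp (-b*s^2) + a^2*(s^4 * Real.exp (-b*s^2)))) :=
      ((integrable_pow_mul_gauss' hb 2).add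
        ((integrable_pow_mul_gauss' hb 4).const_mul (a^2))).const_mul _
    apply Integrable.mono' hmaj hcont.aestronglyMeasurable
    apply Filter.Eventually.of_forall
    intro s
    rw [Real.norm_eq_abs]
    have hΔs := hΔpos s
    have hXnn : (0:ℝ) ≤ s^2*(1+a^2*s^2) := by positivity
    have hb1 : |a*(1-2*μ)*s / Real.sqrt (a^2*s^2+4*a)| ≤ |1-2*μ| := by
      rw [abs_div, abs_of_pos hΔs, div_le_iff₀ hΔs]
      have h1 : |a*(1-2*μ)*s| = |1-2*μ| * (a * |s|) := by
        rw [show a*(1-2*μ)*s = (1-2*μ)*(a*s) by ring, abs_mul, abs_mul, abs_of_pos ha]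
      rw [h1]
      apply mul_le_mul_of_nonneg_left _ (abs_nonneg _)
      have h2 : Real.sqrt (a^2*s^2) = a * |s| := by
        rw [show a^2*s^2 = (a*s)^2 by ring, Real.sqrt_sq_eq_abs, abs_mul, abs_of_pos ha]
      rw [← h2]
      apply Real.sqrt_le_sqrt
      nlinarith [ha.le]
    calc |O s| = (|c0| * Real.exp (-b*s^2) * (s^2*(1+a^2*s^2)))
          * |a*(1-2*μ)*s / Real.sqrt (a^2*s^2+4*a)| := by
          rw [hOdef]
          simp only
          rw [abs_mul, abs_mul, abs_mul, abs_of_pos (Real.exp_pos _), abs_of_nonneg hXnn]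
      _ ≤ (|c0| * Real.exp (-b*s^2) * (s^2*(1+a^2*s^2))) * |1-2*μ| :=
          mul_le_mul_of_nonneg_left hb1 (by positivity)
      _ = |c0*(1-2*μ)| * (s^2 * Real.exp (-b*s^2) + a^2*(s^4 * Real.exp (-b*s^2))) := by
          rw [abs_mul]
          ring
  have hO_odd : ∀ s : ℝ, O (-s) = - O s := by
    intro s
    rw [hOdef]
    simp only [neg_sq]
    ring
  have hO_zero : ∫ s : ℝ, O s = 0 := integral_odd_eq_zero' O hO_odd
  have hint2 : Integrable (fun s : ℝ => c0*(s^2*Real.exp (-b*s^2))) :=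
    (integrable_pow_mul_gauss' hb 2).const_mul c0
  have hint4 : Integrable (fun s : ℝ => c0*a^2*(s^4*Real.exp (-b*s^2))) :=
    (integrable_pow_mul_gauss' hb 4).const_mul (c0*a^2)
  have hs2πne : Real.sqrt (2*π*σ2) ≠ 0 := ne_of_gt hs2π
  calc ∫ x : ℝ, g x
      = ∫ x : ℝ, (c0*(x^2*Real.exp (-b*x^2)) + c0*a^2*(x^4*Real.exp (-b*x^2)) + O x) := by
        rw [show g = fun x => c0*(x^2*Real.exp (-b*x^2)) + c0*a^2*(x^4*Real.exp (-b*x^2)) + O x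
          from funext hgsplit]
    _ = ((∫ x : ℝ, c0*(x^2*Real.exp (-b*x^2)))
          + ∫ x : ℝ, c0*a^2*(x^4*Real.exp (-b*x^2))) + ∫ x : ℝ, O x := by
        have hAB : Integrable (fun x : ℝ => c0*(x^2*Real.exp (-b*x^2))
            + c0*a^2*(x^4*Real.exp (-b*x^2))) := hint2.add hint4
        rw [integral_add hAB hO_int, integral_add hint2 hint4]
    _ = simplexV μ σ2 := by
        rw [hO_zero, integral_const_mul, integral_const_mul,
          integral_gauss_two' hb, integral_gauss_four' hb]
        have hπb : π / b = 2*π*σ2 := by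
          rw [hbdef]
          field_simp
        rw [hπb, simplexV, hc0def, hbdef]
        rw [show μ^3*(1-μ)^3 = a^3 by rw [hadef]; ring,
          show μ*(1-μ) = a from hadef.symm]
        field_simp
        ring
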